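/- arXiv:1804.09709 — 2 statements merged into one kernel-verified Lean document; each statement's English description precedes it below -/
import Mathlib

section
/- Dimension formula for the cycle invariant: for every permutation σ of S_n, the sum of the lengths of the cycles of σ equals n − 1, i.e. Σ_{ℓ ∈ λ(σ)} ℓ = n − 1 (sum with multiplicity). Equivalently, if m_i denotes the multiplicity of the integer i in λ(σ), then Σ_i i·m_i = n − 1. -/
namespace Rauzy

/-- Darts: `Sum.inl i` is the bottom point of (0-indexed) position `i`,
`Sum.inr j` is the top point of (0-indexed) position `j`. -/
abbrev Darts (n : ℕ) := Fin n ⊕ Fin n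

/-- The chord involution of the diagram of `σ`: bottom point `i` ↔ top point `σ i`. -/
def chordInv {n : ℕ} (σ : Equiv.Perm (Fin n)) : Equiv.Perm (Darts n) :=
  (Equiv.sumCongr (σ : Fin n ≃ Fin n) (σ⁻¹ : Fin n ≃ Fin n)).trans (Equiv.sumComm _ _)

/-- Coding of the `2n` points, in clockwise order `b_1, …, b_n, t_n, …, t_1`, by `Fin (n + n)`. -/
def circCode (n : ℕ) : Darts n ≃ Fin (n + n) :=
  (Equiv.sumCongr (Equiv.refl (Fin n)) (Fin.revPerm : Equiv.Perm (Fin n))).trans finSumFinEquiv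

/-- Clockwise successor among the `2n` circle points. -/
def nextPoint (n : ℕ) : Equiv.Perm (Darts n) :=
  ((circCode n).trans (finRotate (n + n))).trans (circCode n).symm

/-- The face (boundary walk) permutation of the one-vertex ribbon graph whose chords are
the edges of `σ`; the faces of the ribbon graph are the orbits of this permutation. -/
def facePerm {n : ℕ} (σ : Equiv.Perm (Fin n)) : Equiv.Perm (Darts n) :=
  (chordInv σ).trans (nextPoint n)

/-- The step made from dart `p` traverses the circle arc whose clockwise starting point is
`chordInv σ p`; this arc is one of the `n - 1` (proper) top arcs exactly when that point is a
top point other than the leftmost one. -/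
def isTopStart {n : ℕ} (σ : Equiv.Perm (Fin n)) (p : Darts n) : Bool :=
  match chordInv σ p with
  | Sum.inl _ => false
  | Sum.inr j => decide (1 ≤ (j : ℕ))

/-- The face (orbit of the face permutation) containing the dart `p`. -/
def faceOf {n : ℕ} (σ : Equiv.Perm (Fin n)) (p : Darts n) : Finset (Darts n) :=
  Finset.univ.filter fun q => ∃ k : Fin (n + n), ((facePerm σ) ^ (k : ℕ)) p = q

/-- The length of a face: the number of top arcs on its boundary. -/
def faceLen {n : ℕ} (σ : Equiv.Perm (Fin n)) (F : Finset (Darts n)) : ℕ :=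
  (F.filter fun q => isTopStart σ q = true).card

/-- The cycle invariant `λ(σ)`: the multiset of the lengths of the cycles (faces) of `σ`. -/
def cycleInv {n : ℕ} (σ : Equiv.Perm (Fin n)) : Multiset ℕ :=
  (Finset.univ.image fun p => faceOf σ p).val.map (faceLen σ)

/-- `χ(S)`: the number of pairs `i < j` in `S` with `σ i > σ j`. -/
def inversions {n : ℕ} (σ : Equiv.Perm (Fin n)) (S : Finset (Fin n)) : ℕ :=
  ((S ×ˢ S).filter fun p => p.1 < p.2 ∧ σ p.2 < σ p.1).card

/-- `A(σ) = Σ_{S ⊆ {1,…,n}} (-1)^{|S| + χ(S)}`. -/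
def signSum {n : ℕ} (σ : Equiv.Perm (Fin n)) : ℤ :=
  ∑ S : Finset (Fin n), (-1 : ℤ) ^ (S.card + inversions σ S)

/-- The sign invariant `s(σ) ∈ {-1, 0, 1}`. -/
def signInv {n : ℕ} (σ : Equiv.Perm (Fin n)) : ℤ := (signSum σ).sign

/-- The permutation of the values which fixes `v ≤ a`, sends `v ↦ v + 1` for
`a < v < n` and the largest value to `a + 1` (the identity if `a` is the largest value). -/
def topCycle {n : ℕ} (a : Fin (n + 1)) : Equiv.Perm (Fin (n + 1)) :=
  if a = Fin.last n then 1
  else (Equiv.addLeft (a + 1)).permCongr (Fin.cycleRange (Fin.last n - (a + 1)))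

/-- The Rauzy move `L`. -/
def moveL : {n : ℕ} → Equiv.Perm (Fin n) → Equiv.Perm (Fin n)
  | 0, σ => σ
  | (k + 1), σ => topCycle (σ (Fin.last k)) * σ

/-- The Rauzy move `L'`. -/
def moveL' : {n : ℕ} → Equiv.Perm (Fin n) → Equiv.Perm (Fin n)
  | 0, σ => σ
  | (k + 1), σ => σ * (topCycle (σ⁻¹ (Fin.last k)))⁻¹

/-- Rotation of the diagram by 180 degrees: `rot(σ)(i) = n + 1 - σ⁻¹(n + 1 - i)`. -/
def rotD {n : ℕ} (σ : Equiv.Perm (Fin n)) : Equiv.Perm (Fin n) :=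
  (Fin.revPerm : Equiv.Perm (Fin n)) * σ⁻¹ * (Fin.revPerm : Equiv.Perm (Fin n))

/-- The Rauzy move `R = rot ∘ L ∘ rot`. -/
def moveR {n : ℕ} (σ : Equiv.Perm (Fin n)) : Equiv.Perm (Fin n) := rotD (moveL (rotD σ))

/-- The Rauzy move `R' = rot ∘ L' ∘ rot`. -/
def moveR' {n : ℕ} (σ : Equiv.Perm (Fin n)) : Equiv.Perm (Fin n) := rotD (moveL' (rotD σ))

/-- One step of the extended Rauzy dynamics. -/
def RauzyStep {n : ℕ} (σ τ : Equiv.Perm (Fin n)) : Prop :=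
  τ = moveL σ ∨ τ = moveL' σ ∨ τ = moveR σ ∨ τ = moveR' σ

/-- Two permutations are connected (are in the same class) under the extended Rauzy dynamics. -/
def RauzyConnected {n : ℕ} (σ τ : Equiv.Perm (Fin n)) : Prop :=
  Relation.EqvGen RauzyStep σ τ

/-- The exceptional class is the class of the identity permutation. -/
def Exceptional {n : ℕ} (σ : Equiv.Perm (Fin n)) : Prop := RauzyConnected σ 1

/-- Reduction of `σ` by the edge `(i, σ i)`: delete bottom point `i` and top point `σ i`
and renumber the remaining points in order. -/
def reduceAt {n : ℕ} (σ : Equiv.Perm (Fin (n + 1))) (i : Fin (n + 1)) : Equiv.Perm (Fin n) :=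
  Equiv.removeNone
    (((finSuccEquiv' i).symm.trans (σ : Fin (n + 1) ≃ Fin (n + 1))).trans (finSuccEquiv' (σ i)))

/-- Insertion of one new edge in `σ`, with bottom endpoint at (new) position `b` and top
endpoint at (new) position `t`. -/
def insertAt {n : ℕ} (σ : Equiv.Perm (Fin (n + 1))) (b t : Fin (n + 2)) :
    Equiv.Perm (Fin (n + 2)) :=
  ((finSuccEquiv' b).trans (Equiv.optionCongr σ)).trans (finSuccEquiv' t).symm

/-- The face containing the top arc whose clockwise starting point is the top point `j`
(for `1 ≤ j` this is the top arc lying immediately to the left of top point `j`). -/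
def faceOfTopPoint {n : ℕ} (σ : Equiv.Perm (Fin n)) (j : Fin n) : Finset (Darts n) :=
  faceOf σ (chordInv σ (Sum.inr j))

/-- The face containing the bottom arc between bottom points `i` and `i + 1`. -/
def faceOfBotPoint {n : ℕ} (σ : Equiv.Perm (Fin n)) (i : Fin n) : Finset (Darts n) :=
  faceOf σ (chordInv σ (Sum.inl i))

/-- The top principal cycle: the face containing the top arc between top points 1 and 2. -/
def topPrincipalFace {n : ℕ} (σ : Equiv.Perm (Fin (n + 1))) : Finset (Darts (n + 1)) :=
  faceOfTopPoint σ 1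

/-- The bottom principal cycle: the face containing the bottom arc between bottom points
1 and 2. -/
def botPrincipalFace {n : ℕ} (σ : Equiv.Perm (Fin (n + 1))) : Finset (Darts (n + 1)) :=
  faceOfBotPoint σ 0

def topPrincipalLen {n : ℕ} (σ : Equiv.Perm (Fin (n + 1))) : ℕ :=
  faceLen σ (topPrincipalFace σ)

def botPrincipalLen {n : ℕ} (σ : Equiv.Perm (Fin (n + 1))) : ℕ :=
  faceLen σ (botPrincipalFace σ)

/-- The dart whose step traverses the top principal arc. -/
def topPrincipalDart {n : ℕ} (σ : Equiv.Perm (Fin (n + 1))) : Darts (n + 1) :=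
  chordInv σ (Sum.inr 1)

/-- The dart whose step traverses the bottom principal arc. -/
def botPrincipalDart {n : ℕ} (σ : Equiv.Perm (Fin (n + 1))) : Darts (n + 1) :=
  chordInv σ (Sum.inl 0)

open scoped Classical in
/-- When the top and bottom principal arcs lie on a common cycle, the number of top arcs on
the portion of that cycle going from the bottom principal arc to the top principal arc
(inclusive of the latter). -/
noncomputable def portionA {n : ℕ} (σ : Equiv.Perm (Fin (n + 1))) : ℕ :=
  if h : ∃ k, 0 < k ∧ ((facePerm σ) ^ k) (botPrincipalDart σ) = topPrincipalDart σ then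
    ((Finset.Icc 1 (Nat.find h)).filter fun e =>
      isTopStart σ (((facePerm σ) ^ e) (botPrincipalDart σ)) = true).card
  else 0

open scoped Classical in
/-- The number of top arcs on the other portion, from the top principal arc (inclusive)
to the bottom principal arc. -/
noncomputable def portionB {n : ℕ} (σ : Equiv.Perm (Fin (n + 1))) : ℕ :=
  if h : ∃ k, 0 < k ∧ ((facePerm σ) ^ k) (topPrincipalDart σ) = botPrincipalDart σ then
    ((Finset.range (Nat.find h)).filter fun e =>
      isTopStart σ (((facePerm σ) ^ e) (topPrincipalDart σ)) = true).card
  else 0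

/-- A standard permutation has type `X(r, i)` if its top and bottom principal cycles are
distinct, of lengths `r` and `i` respectively. -/
def TypeX {n : ℕ} (σ : Equiv.Perm (Fin (n + 1))) (r i : ℕ) : Prop :=
  topPrincipalFace σ ≠ botPrincipalFace σ ∧ topPrincipalLen σ = r ∧ botPrincipalLen σ = i

/-- A standard permutation has type `H(a, b)` if its top and bottom principal cycles
coincide, and the two portions into which the two principal arcs divide this common cycle
carry `a` resp. `b` top arcs. -/
def TypeH {n : ℕ} (σ : Equiv.Perm (Fin (n + 1))) (a b : ℕ) : Prop :=
  topPrincipalFace σ = botPrincipalFace σ ∧ portionA σ = a ∧ portionB σ = b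

instance {n : ℕ} (σ : Equiv.Perm (Fin (n + 1))) (r i : ℕ) : Decidable (TypeX σ r i) :=
  inferInstanceAs (Decidable
    (topPrincipalFace σ ≠ botPrincipalFace σ ∧ topPrincipalLen σ = r ∧ botPrincipalLen σ = i))

noncomputable instance {n : ℕ} (σ : Equiv.Perm (Fin (n + 1))) (a b : ℕ) : Decidable (TypeH σ a b) :=
  inferInstanceAs (Decidable
    (topPrincipalFace σ = botPrincipalFace σ ∧ portionA σ = a ∧ portionB σ = b))

/-- The step made from dart `p` traverses one of the two side arcs (the arc from `t_1` to
`b_1`, or the arc from `b_n` to `t_n`). -/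
def isSideStart {n : ℕ} (σ : Equiv.Perm (Fin (n + 1))) (p : Darts (n + 1)) : Prop :=
  chordInv σ p = Sum.inr 0 ∨ chordInv σ p = Sum.inl (Fin.last n)

/-- Given labelling data `f`, the dart of the arc carrying label `(m, k, j)`: for odd `j` the
top arc `t_{j,m,k}` whose clockwise starting top point is `f m k j`, for even `j` the bottom
arc `b_{j,m,k}` starting at bottom point `f m k j`. -/
def labDart {n : ℕ} (σ : Equiv.Perm (Fin (n + 1))) (f : ℕ → ℕ → ℕ → Fin (n + 1))
    (m k j : ℕ) : Darts (n + 1) :=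
  if j % 2 = 1 then chordInv σ (Sum.inr (f m k j)) else chordInv σ (Sum.inl (f m k j))

/-- `(m, k, j)` is a valid arc label: `m` occurs in `λ(σ)` with multiplicity at least `k ≥ 1`,
and `j < 2m`. -/
def ValidLabel {n : ℕ} (σ : Equiv.Perm (Fin (n + 1))) (m k j : ℕ) : Prop :=
  1 ≤ k ∧ k ≤ (cycleInv σ).count m ∧ j < 2 * m

/-- `f` is a consistent labelling of the arcs of `σ`: for each cycle of length `m`
(the `k`-th among those), its top arcs are labelled `t_{1,m,k}, t_{3,m,k}, …` and its bottom
arcs `b_{0,m,k}, b_{2,m,k}, …`, interleaved, following the cyclic order of the cycle. -/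
def IsConsistentLabelling {n : ℕ} (σ : Equiv.Perm (Fin (n + 1)))
    (f : ℕ → ℕ → ℕ → Fin (n + 1)) : Prop :=
  (∀ m k j, ValidLabel σ m k j → j % 2 = 1 → 1 ≤ (f m k j : ℕ)) ∧
  (∀ m k j, ValidLabel σ m k j → j % 2 = 0 → (f m k j : ℕ) < n) ∧
  (∀ m k j, ValidLabel σ m k j →
    faceOf σ (labDart σ f m k j) = faceOf σ (labDart σ f m k 0)) ∧
  (∀ m k j, ValidLabel σ m k j → faceLen σ (faceOf σ (labDart σ f m k j)) = m) ∧
  (∀ m k j m' k' j', ValidLabel σ m k j → ValidLabel σ m' k' j' →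
    labDart σ f m k j = labDart σ f m' k' j' → m = m' ∧ k = k' ∧ j = j') ∧
  (∀ m k m' k', ValidLabel σ m k 0 → ValidLabel σ m' k' 0 →
    faceOf σ (labDart σ f m k 0) = faceOf σ (labDart σ f m' k' 0) → m = m' ∧ k = k') ∧
  (∀ p : Darts (n + 1), ¬ isSideStart σ p → ∃ m k j, ValidLabel σ m k j ∧ labDart σ f m k j = p) ∧
  (∀ m k j, ValidLabel σ m k j → ∃ d, 0 < d ∧
    ((facePerm σ) ^ d) (labDart σ f m k j) = labDart σ f m k ((j + 1) % (2 * m)) ∧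
    ∀ e, 0 < e → e < d → isSideStart σ (((facePerm σ) ^ e) (labDart σ f m k j)))


section Scratch
open Equiv Equiv.Perm Finset

variable {n : ℕ} (σ : Equiv.Perm (Fin (n + 1)))

lemma mem_faceOf_iff (p q : Darts (n + 1)) :
    q ∈ faceOf σ p ↔ (facePerm σ).SameCycle p q := by
  simp only [faceOf, Finset.mem_filter, Finset.mem_univ, true_and]
  constructor
  · rintro ⟨k, rfl⟩
    exact ⟨(k : ℕ), by simp [zpow_natCast]⟩
  · intro h
    by_cases hp : p ∈ (facePerm σ).support
    · obtain ⟨i, hi, hiq⟩ := h.exists_pow_eq_of_mem_support hp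
      have hcard : ((facePerm σ).cycleOf p).support.card ≤ (n + 1) + (n + 1) := by
        calc ((facePerm σ).cycleOf p).support.card ≤ Fintype.card (Darts (n + 1)) :=
              Finset.card_le_univ _
        _ = (n + 1) + (n + 1) := by simp
      exact ⟨⟨i, lt_of_lt_of_le hi hcard⟩, hiq⟩
    · rw [Equiv.Perm.notMem_support] at hp
      obtain ⟨k, rfl⟩ := h
      refine ⟨⟨0, by omega⟩, ?_⟩
      simp [Equiv.Perm.zpow_apply_eq_self_of_apply_eq_self hp]

lemma faceOf_eq_iff_mem (p q : Darts (n + 1)) :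
    faceOf σ q = faceOf σ p ↔ q ∈ faceOf σ p := by
  constructor
  · intro h
    rw [← h, mem_faceOf_iff]
  · intro h
    rw [mem_faceOf_iff] at h
    ext r
    rw [mem_faceOf_iff, mem_faceOf_iff]
    exact ⟨fun h' => h.trans h', fun h' => h.symm.trans h'⟩

lemma card_top : (Finset.univ.filter fun q : Darts (n + 1) => isTopStart σ q = true).card = n := by
  have himg : (Finset.univ.filter fun q : Darts (n + 1) => isTopStart σ q = true).image
      (chordInv σ) = (Finset.univ.filter fun j : Fin (n + 1) => 1 ≤ (j : ℕ)).image Sum.inr := by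
    ext d
    simp only [Finset.mem_image, Finset.mem_filter, Finset.mem_univ, true_and]
    constructor
    · rintro ⟨q, hq, rfl⟩
      unfold isTopStart at hq
      cases h : chordInv σ q with
      | inl i => rw [h] at hq; simp at hq
      | inr j =>
        rw [h] at hq; simp only [decide_eq_true_eq] at hq
        exact ⟨j, hq, rfl⟩
    · rintro ⟨j, hj, rfl⟩
      refine ⟨(chordInv σ).symm (Sum.inr j), ?_, by simp⟩
      unfold isTopStart
      rw [Equiv.apply_symm_apply]
      simpa using hj
  have h1 := Finset.card_image_of_injective
    (Finset.univ.filter fun q : Darts (n + 1) => isTopStart σ q = true) (chordInv σ).injective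
  have h2 := Finset.card_image_of_injective
    (Finset.univ.filter fun j : Fin (n + 1) => 1 ≤ (j : ℕ)) (Sum.inr_injective (α := Fin (n + 1)))
  have h3 : (Finset.univ.filter fun j : Fin (n + 1) => 1 ≤ (j : ℕ)) =
      Finset.univ.erase 0 := by
    ext j
    simp only [Finset.mem_filter, Finset.mem_univ, true_and, Finset.mem_erase, and_true]
    exact Fin.pos_iff_ne_zero
  rw [← h1, himg, h2, h3, Finset.card_erase_of_mem (Finset.mem_univ _)]
  simp

theorem dimension_formula' (σ : Equiv.Perm (Fin (n + 1))) :
    (cycleInv σ).sum = n ∧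
    ∑ i ∈ (cycleInv σ).toFinset, i * (cycleInv σ).count i = n := by
  have hsum : (cycleInv σ).sum = n := by
    have h0 : (cycleInv σ).sum = ∑ F ∈ Finset.univ.image (fun p => faceOf σ p), faceLen σ F :=
      rfl
    have hfib := Finset.card_eq_sum_card_fiberwise
      (s := Finset.univ.filter fun q : Darts (n + 1) => isTopStart σ q = true)
      (t := Finset.univ.image (fun p => faceOf σ p)) (f := faceOf σ)
      (fun x _ => Finset.mem_image_of_mem _ (Finset.mem_univ x))
    rw [card_top σ] at hfib
    rw [h0]
    refine Eq.trans ?_ hfib.symm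
    apply Finset.sum_congr rfl
    intro F hF
    obtain ⟨p, -, rfl⟩ := Finset.mem_image.mp hF
    unfold faceLen
    congr 1
    ext q
    simp only [Finset.mem_filter, Finset.mem_univ, true_and]
    rw [faceOf_eq_iff_mem]
    exact and_comm
  refine ⟨hsum, ?_⟩
  have h := Finset.sum_multiset_map_count (cycleInv σ) (id : ℕ → ℕ)
  simp only [Multiset.map_id', smul_eq_mul, id_eq] at h
  refine Eq.trans ?_ (h.symm.trans hsum)
  exact Finset.sum_congr rfl fun i _ => mul_comm _ _

end Scratch


/-- **Dimension formula.** The lengths of the cycles of a permutation of size `n + 1` add up to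
`(n + 1) - 1 = n`; equivalently `Σ_i i · m_i = n` where `m_i` is the multiplicity of `i` in
`λ(σ)`. -/
theorem dimension_formula (n : ℕ) (σ : Equiv.Perm (Fin (n + 1))) :
    (cycleInv σ).sum = n ∧
    ∑ i ∈ (cycleInv σ).toFinset, i * (cycleInv σ).count i = n := dimension_formula' σ

end Rauzy
end

section
/- Rotation invariance of the invariants: for every permutation σ of S_n, the permutation rot(σ) defined by rot(σ)(i) = n+1−σ⁻¹(n+1−i) (the diagram of σ rotated by 180 degrees) satisfies λ(rot(σ)) = λ(σ) and s(rot(σ)) = s(σ). -/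
namespace Rauzy

section RotAux

open Equiv Finset

variable {n : ℕ}

/-- The half-turn of the circle of darts: bottom `i` ↔ top `rev i`. -/
def rho (n : ℕ) : Equiv.Perm (Darts n) :=
  (Equiv.sumCongr (Fin.revPerm : Equiv.Perm (Fin n)) (Fin.revPerm : Equiv.Perm (Fin n))).trans
    (Equiv.sumComm _ _)

@[simp] lemma rho_inl (i : Fin n) : rho n (Sum.inl i) = Sum.inr i.rev := rfl
@[simp] lemma rho_inr (j : Fin n) : rho n (Sum.inr j) = Sum.inl j.rev := rfl

@[simp] lemma rho_rho (d : Darts n) : rho n (rho n d) = d := by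
  cases d <;> simp

@[simp] lemma chordInv_inl (σ : Equiv.Perm (Fin n)) (i : Fin n) :
    chordInv σ (Sum.inl i) = Sum.inr (σ i) := rfl

@[simp] lemma chordInv_inr (σ : Equiv.Perm (Fin n)) (j : Fin n) :
    chordInv σ (Sum.inr j) = Sum.inl (σ⁻¹ j) := rfl

lemma rotD_apply (σ : Equiv.Perm (Fin n)) (i : Fin n) :
    rotD σ i = (σ⁻¹ i.rev).rev := rfl

lemma rotD_inv_apply (σ : Equiv.Perm (Fin n)) (i : Fin n) :
    (rotD σ)⁻¹ i = (σ i.rev).rev := by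
  have : (rotD σ)⁻¹ = (Fin.revPerm : Equiv.Perm (Fin n)) * σ * (Fin.revPerm : Equiv.Perm (Fin n)) := by
    have hrev : (Fin.revPerm : Equiv.Perm (Fin n))⁻¹ = Fin.revPerm := Fin.revPerm_symm
    rw [rotD, mul_inv_rev, mul_inv_rev, hrev, inv_inv, mul_assoc]
  rw [this]; rfl

lemma chordInv_rot (σ : Equiv.Perm (Fin n)) (d : Darts n) :
    chordInv (rotD σ) (rho n d) = rho n (chordInv σ d) := by
  cases d with
  | inl i => simp [rotD_inv_apply, Fin.rev_rev]
  | inr j => simp [rotD_apply, Fin.rev_rev]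

end RotAux

section Circle

variable {n : ℕ}

lemma val_circCode_inl (i : Fin n) : (circCode n (Sum.inl i) : ℕ) = i := by
  simp [circCode]

lemma val_circCode_inr (j : Fin n) : (circCode n (Sum.inr j) : ℕ) = n + (j.rev : ℕ) := by
  simp only [circCode, Equiv.trans_apply, Equiv.sumCongr_apply, Sum.map_inr,
    finSumFinEquiv_apply_right, Fin.coe_natAdd]
  rfl

lemma circ_rho (d : Darts (n + 1)) :
    circCode (n + 1) (rho (n + 1) d) =
      circCode (n + 1) d + ⟨n + 1, by omega⟩ := by
  apply Fin.ext
  rw [Fin.val_add]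
  cases d with
  | inl i =>
    have hmk : ((⟨n + 1, by omega⟩ : Fin ((n + 1) + (n + 1))) : ℕ) = n + 1 := rfl
    rw [rho_inl, val_circCode_inl, val_circCode_inr, Fin.rev_rev, hmk,
      Nat.mod_eq_of_lt (by omega)]
    omega
  | inr j =>
    rw [rho_inr, val_circCode_inl, val_circCode_inr]
    have hr : (Fin.rev j : ℕ) < n + 1 := (Fin.rev j).isLt
    have hmk : ((⟨n + 1, by omega⟩ : Fin ((n + 1) + (n + 1))) : ℕ) = n + 1 := rfl
    rw [hmk, show n + 1 + (Fin.rev j : ℕ) + (n + 1) = ((n + 1) + (n + 1)) + (Fin.rev j : ℕ) by omega,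
      Nat.add_mod_left, Nat.mod_eq_of_lt (by omega)]

lemma rho_eq (d : Darts (n + 1)) :
    rho (n + 1) d = (circCode (n + 1)).symm (circCode (n + 1) d + ⟨n + 1, by omega⟩) := by
  rw [← circ_rho]; simp

lemma nextPoint_eq (e : Darts (n + 1)) :
    nextPoint (n + 1) e = (circCode (n + 1)).symm (circCode (n + 1) e + ⟨1, by omega⟩) := by
  have h1 : ∀ x : Fin ((n + 1) + n + 1), finRotate ((n + 1) + n + 1) x = x + 1 :=
    finRotate_succ_apply
  show (circCode (n + 1)).symm (finRotate ((n + 1) + n + 1) (circCode (n + 1) e)) = _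
  rw [h1]
  congr 1
  apply Fin.ext
  rw [Fin.val_add, Fin.val_add]
  have hv : ((1 : Fin ((n + 1) + n + 1)) : ℕ) = 1 := by
    rw [Fin.val_one']; exact Nat.mod_eq_of_lt (by omega)
  rw [hv]

lemma fin_add_right_comm (a b c : Fin ((n + 1) + (n + 1))) : a + b + c = a + c + b := by
  apply Fin.ext
  rw [Fin.val_add, Fin.val_add, Fin.val_add, Fin.val_add, Nat.mod_add_mod, Nat.mod_add_mod]
  congr 1
  omega

lemma nextPoint_rho (d : Darts (n + 1)) :
    nextPoint (n + 1) (rho (n + 1) d) = rho (n + 1) (nextPoint (n + 1) d) := by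
  rw [nextPoint_eq, rho_eq d, rho_eq, nextPoint_eq]
  simp only [Equiv.apply_symm_apply]
  rw [fin_add_right_comm]

lemma facePerm_rho (σ : Equiv.Perm (Fin (n + 1))) (d : Darts (n + 1)) :
    facePerm (rotD σ) (rho (n + 1) d) = rho (n + 1) (facePerm σ d) := by
  show nextPoint (n + 1) (chordInv (rotD σ) (rho (n + 1) d)) = _
  rw [chordInv_rot, nextPoint_rho]
  rfl

lemma facePerm_pow_rho (σ : Equiv.Perm (Fin (n + 1))) (k : ℕ) (d : Darts (n + 1)) :
    ((facePerm (rotD σ)) ^ k) (rho (n + 1) d) = rho (n + 1) (((facePerm σ) ^ k) d) := by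
  induction k with
  | zero => simp
  | succ m ih =>
    rw [pow_succ', Equiv.Perm.mul_apply, pow_succ', Equiv.Perm.mul_apply, ih, facePerm_rho]

end Circle

section Faces

variable {n : ℕ}

lemma mem_faceOf {σ : Equiv.Perm (Fin (n + 1))} {p q : Darts (n + 1)} :
    q ∈ faceOf σ p ↔ ∃ k : Fin ((n + 1) + (n + 1)), ((facePerm σ) ^ (k : ℕ)) p = q := by
  simp [faceOf]

lemma exists_period (f : Equiv.Perm (Darts (n + 1))) (p : Darts (n + 1)) :
    ∃ d, 0 < d ∧ d ≤ (n + 1) + (n + 1) ∧ (f ^ d) p = p := by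
  have hcard : Fintype.card (Darts (n + 1)) < Fintype.card (Fin ((n + 1) + (n + 1) + 1)) := by
    simp [Darts]
  obtain ⟨a, b, hab, hfab⟩ :=
    Fintype.exists_ne_map_eq_of_card_lt (fun k : Fin ((n + 1) + (n + 1) + 1) =>
      (f ^ (k : ℕ)) p) hcard
  rcases Ne.lt_or_gt hab with h | h
  · refine ⟨(b : ℕ) - (a : ℕ), by omega, by have := b.isLt; omega, ?_⟩
    have hpow : (f ^ (a : ℕ)) ((f ^ ((b : ℕ) - (a : ℕ))) p) = (f ^ (a : ℕ)) p := by
      rw [← Equiv.Perm.mul_apply, ← pow_add]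
      have : (a : ℕ) + ((b : ℕ) - (a : ℕ)) = (b : ℕ) := by
        have : (a : ℕ) < (b : ℕ) := h
        omega
      rw [this, hfab]
    exact (f ^ (a : ℕ)).injective hpow
  · refine ⟨(a : ℕ) - (b : ℕ), by omega, by have := a.isLt; omega, ?_⟩
    have hpow : (f ^ (b : ℕ)) ((f ^ ((a : ℕ) - (b : ℕ))) p) = (f ^ (b : ℕ)) p := by
      rw [← Equiv.Perm.mul_apply, ← pow_add]
      have hba : (b : ℕ) + ((a : ℕ) - (b : ℕ)) = (a : ℕ) := by
        have : (b : ℕ) < (a : ℕ) := h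
        omega
      rw [hba, hfab]
    exact (f ^ (b : ℕ)).injective hpow

lemma pow_mul_period {f : Equiv.Perm (Darts (n + 1))} {p : Darts (n + 1)} {d : ℕ}
    (hd : (f ^ d) p = p) (j : ℕ) : (f ^ (d * j)) p = p := by
  induction j with
  | zero => simp
  | succ m ih =>
    rw [Nat.mul_succ, pow_add, Equiv.Perm.mul_apply, hd, ih]

lemma mem_faceOf_iff_nat {σ : Equiv.Perm (Fin (n + 1))} {p q : Darts (n + 1)} :
    q ∈ faceOf σ p ↔ ∃ k : ℕ, ((facePerm σ) ^ k) p = q := by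
  rw [mem_faceOf]
  constructor
  · rintro ⟨k, hk⟩; exact ⟨(k : ℕ), hk⟩
  · rintro ⟨k, rfl⟩
    obtain ⟨d, hd0, hdm, hdp⟩ := exists_period (facePerm σ) p
    refine ⟨⟨k % d, lt_of_lt_of_le (Nat.mod_lt _ hd0) hdm⟩, ?_⟩
    show ((facePerm σ) ^ (k % d)) p = _
    conv_rhs => rw [show k = k % d + d * (k / d) from (Nat.mod_add_div k d).symm]
    rw [pow_add, Equiv.Perm.mul_apply, pow_mul_period hdp]

lemma facePerm_mem_faceOf {σ : Equiv.Perm (Fin (n + 1))} {p q : Darts (n + 1)}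
    (h : q ∈ faceOf σ p) : facePerm σ q ∈ faceOf σ p := by
  rw [mem_faceOf_iff_nat] at h ⊢
  obtain ⟨k, rfl⟩ := h
  exact ⟨k + 1, by rw [pow_succ', Equiv.Perm.mul_apply]⟩

lemma image_facePerm_faceOf (σ : Equiv.Perm (Fin (n + 1))) (p : Darts (n + 1)) :
    (faceOf σ p).image (facePerm σ) = faceOf σ p := by
  apply Finset.eq_of_subset_of_card_le
  · intro q hq
    obtain ⟨q', hq', rfl⟩ := Finset.mem_image.1 hq
    exact facePerm_mem_faceOf hq'
  · rw [Finset.card_image_of_injective _ (facePerm σ).injective]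

lemma sum_facePerm (σ : Equiv.Perm (Fin (n + 1))) (p : Darts (n + 1))
    (g : Darts (n + 1) → ℕ) :
    ∑ q ∈ faceOf σ p, g (facePerm σ q) = ∑ q ∈ faceOf σ p, g q := by
  conv_rhs => rw [← image_facePerm_faceOf σ p]
  rw [Finset.sum_image fun a _ b _ h => (facePerm σ).injective h]

/-- Side of a dart: `0` for bottom, `1` for top. -/
def sideN {n : ℕ} : Darts n → ℕ := Sum.elim (fun _ => 0) (fun _ => 1)

/-- The step from `q` traverses one of the `n - 1` proper bottom arcs. -/
def isBotStart {n : ℕ} (σ : Equiv.Perm (Fin (n + 1))) (q : Darts (n + 1)) : Bool :=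
  match chordInv σ q with
  | Sum.inl i => decide ((i : ℕ) < n)
  | Sum.inr _ => false

lemma side_circ_symm (x : Fin ((n + 1) + (n + 1))) :
    sideN ((circCode (n + 1)).symm x) = if (x : ℕ) < n + 1 then 0 else 1 := by
  obtain ⟨d, rfl⟩ := (circCode (n + 1)).surjective x
  rw [Equiv.symm_apply_apply]
  cases d with
  | inl i =>
    rw [val_circCode_inl, if_pos i.isLt]
    rfl
  | inr j =>
    rw [val_circCode_inr, if_neg (by omega)]
    rfl

lemma side_next_inl (i : Fin (n + 1)) :
    sideN (nextPoint (n + 1) (Sum.inl i)) = if (i : ℕ) < n then 0 else 1 := by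
  rw [nextPoint_eq, side_circ_symm, Fin.val_add, val_circCode_inl]
  have hmk : ((⟨1, by omega⟩ : Fin ((n + 1) + (n + 1))) : ℕ) = 1 := rfl
  rw [hmk, Nat.mod_eq_of_lt (by have := i.isLt; omega)]
  by_cases h : (i : ℕ) < n
  · rw [if_pos (by omega), if_pos h]
  · rw [if_neg (by have := i.isLt; omega), if_neg h]

lemma side_next_inr (j : Fin (n + 1)) :
    sideN (nextPoint (n + 1) (Sum.inr j)) = if 1 ≤ (j : ℕ) then 1 else 0 := by
  rw [nextPoint_eq, side_circ_symm, Fin.val_add, val_circCode_inr]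
  have hmk : ((⟨1, by omega⟩ : Fin ((n + 1) + (n + 1))) : ℕ) = 1 := rfl
  have hrev : (Fin.rev j : ℕ) = n - (j : ℕ) := by rw [Fin.val_rev]; omega
  rw [hmk, hrev]
  by_cases hj : 1 ≤ (j : ℕ)
  · rw [Nat.mod_eq_of_lt (by have := j.isLt; omega), if_neg (by omega), if_pos hj]
  · have hj0 : (j : ℕ) = 0 := by omega
    rw [show n + 1 + (n - (j : ℕ)) + 1 = (n + 1) + (n + 1) by omega, Nat.mod_self,
      if_pos (by omega), if_neg hj]

lemma side_step (σ : Equiv.Perm (Fin (n + 1))) (q : Darts (n + 1)) :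
    sideN (facePerm σ q) + (if isBotStart σ q = true then 1 else 0)
      = (if isTopStart σ q = true then 1 else 0) + sideN q := by
  cases q with
  | inl i =>
    have h1 : facePerm σ (Sum.inl i) = nextPoint (n + 1) (Sum.inr (σ i)) := rfl
    have h2 : isBotStart σ (Sum.inl i) = false := rfl
    have h3 : isTopStart σ (Sum.inl i) = decide (1 ≤ ((σ i : Fin (n + 1)) : ℕ)) := rfl
    rw [h1, h2, h3, side_next_inr]
    by_cases h : 1 ≤ ((σ i : Fin (n + 1)) : ℕ) <;> simp [h, sideN]
  | inr j =>
    have h1 : facePerm σ (Sum.inr j) = nextPoint (n + 1) (Sum.inl (σ⁻¹ j)) := rfl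
    have h2 : isBotStart σ (Sum.inr j) = decide (((σ⁻¹ j : Fin (n + 1)) : ℕ) < n) := rfl
    have h3 : isTopStart σ (Sum.inr j) = false := rfl
    rw [h1, h2, h3, side_next_inl]
    by_cases h : ((σ⁻¹ j : Fin (n + 1)) : ℕ) < n <;> simp only [Equiv.Perm.coe_inv] at h <;> simp [h, sideN]

lemma bot_card_eq_top_card (σ : Equiv.Perm (Fin (n + 1))) (p : Darts (n + 1)) :
    ((faceOf σ p).filter fun q => isBotStart σ q = true).card
      = ((faceOf σ p).filter fun q => isTopStart σ q = true).card := by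
  have hsum : ∑ q ∈ faceOf σ p, sideN (facePerm σ q) = ∑ q ∈ faceOf σ p, sideN q :=
    sum_facePerm σ p sideN
  have hptsum :
      ∑ q ∈ faceOf σ p, (sideN (facePerm σ q) + (if isBotStart σ q = true then 1 else 0))
        = ∑ q ∈ faceOf σ p, ((if isTopStart σ q = true then 1 else 0) + sideN q) :=
    Finset.sum_congr rfl fun q _ => side_step σ q
  rw [Finset.sum_add_distrib, Finset.sum_add_distrib] at hptsum
  rw [Finset.card_filter, Finset.card_filter]
  omega

end Faces

section CycleRot

variable {n : ℕ}

lemma faceOf_rho (σ : Equiv.Perm (Fin (n + 1))) (p : Darts (n + 1)) :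
    faceOf (rotD σ) (rho (n + 1) p) = (faceOf σ p).image (rho (n + 1)) := by
  ext q
  rw [mem_faceOf, Finset.mem_image]
  constructor
  · rintro ⟨k, rfl⟩
    exact ⟨((facePerm σ) ^ (k : ℕ)) p, mem_faceOf.2 ⟨k, rfl⟩, (facePerm_pow_rho σ k p).symm⟩
  · rintro ⟨q', hq', rfl⟩
    obtain ⟨k, rfl⟩ := mem_faceOf.1 hq'
    exact ⟨k, facePerm_pow_rho σ k p⟩

lemma isTopStart_rot (σ : Equiv.Perm (Fin (n + 1))) (q : Darts (n + 1)) :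
    isTopStart (rotD σ) (rho (n + 1) q) = isBotStart σ q := by
  rcases hc : chordInv σ q with i | j
  · have h1 : chordInv (rotD σ) (rho (n + 1) q) = Sum.inr i.rev := by
      rw [chordInv_rot, hc]; rfl
    have h2 : isTopStart (rotD σ) (rho (n + 1) q) = decide (1 ≤ (i.rev : ℕ)) := by
      unfold isTopStart; rw [h1]
    have h3 : isBotStart σ q = decide ((i : ℕ) < n) := by
      unfold isBotStart; rw [hc]
    rw [h2, h3]
    have : (1 ≤ (i.rev : ℕ)) ↔ ((i : ℕ) < n) := by
      rw [Fin.val_rev]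
      have := i.isLt
      omega
    simp only [decide_eq_decide]
    exact this
  · have h1 : chordInv (rotD σ) (rho (n + 1) q) = Sum.inl j.rev := by
      rw [chordInv_rot, hc]; rfl
    have h2 : isTopStart (rotD σ) (rho (n + 1) q) = false := by
      unfold isTopStart; rw [h1]
    have h3 : isBotStart σ q = false := by
      unfold isBotStart; rw [hc]
    rw [h2, h3]

lemma faceLen_rot (σ : Equiv.Perm (Fin (n + 1))) (p : Darts (n + 1)) :
    faceLen (rotD σ) (faceOf (rotD σ) (rho (n + 1) p)) = faceLen σ (faceOf σ p) := by
  rw [faceOf_rho]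
  unfold faceLen
  rw [Finset.filter_image, Finset.card_image_of_injective _ (rho (n + 1)).injective]
  have : ((faceOf σ p).filter fun q => isTopStart (rotD σ) (rho (n + 1) q) = true)
      = ((faceOf σ p).filter fun q => isBotStart σ q = true) := by
    apply Finset.filter_congr
    intro q _
    rw [isTopStart_rot]
  rw [this, bot_card_eq_top_card]

lemma cycleInv_rot (σ : Equiv.Perm (Fin (n + 1))) : cycleInv (rotD σ) = cycleInv σ := by
  unfold cycleInv
  have himg : (Finset.univ.image fun p => faceOf (rotD σ) p)
      = (Finset.univ.image fun p => faceOf σ p).image fun F => F.image (rho (n + 1)) := by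
    rw [Finset.image_image]
    have hre : (Finset.univ : Finset (Darts (n + 1)))
        = Finset.univ.image (rho (n + 1)) := by
      rw [Finset.image_univ_equiv]
    conv_lhs => rw [hre]
    rw [Finset.image_image]
    apply Finset.image_congr
    intro p _
    exact faceOf_rho σ p
  rw [himg]
  have hinj : Function.Injective fun F : Finset (Darts (n + 1)) => F.image (rho (n + 1)) :=
    Finset.image_injective (rho (n + 1)).injective
  rw [Finset.image_val_of_injOn (hinj.injOn)]
  rw [Multiset.map_map]
  apply Multiset.map_congr rfl
  intro F hF
  obtain ⟨p, _, rfl⟩ := Finset.mem_image.1 (Finset.mem_def.2 hF)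
  show faceLen (rotD σ) ((faceOf σ p).image (rho (n + 1))) = faceLen σ (faceOf σ p)
  rw [← faceOf_rho, faceLen_rot]

end CycleRot

section SignRot

variable {n : ℕ}

lemma rotD_lt_iff (σ : Equiv.Perm (Fin (n + 1))) (a b : Fin (n + 1)) :
    rotD σ a < rotD σ b ↔ σ⁻¹ b.rev < σ⁻¹ a.rev := by
  rw [rotD_apply, rotD_apply, Fin.rev_lt_rev]

lemma inversions_rot (σ : Equiv.Perm (Fin (n + 1))) (S : Finset (Fin (n + 1))) :
    inversions (rotD σ) S = inversions σ (S.image fun x => σ⁻¹ x.rev) := by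
  unfold inversions
  apply Finset.card_bij'
    (i := fun p _ => ((σ⁻¹ p.1.rev : Fin (n + 1)), (σ⁻¹ p.2.rev : Fin (n + 1))))
    (j := fun p _ => (((σ p.1).rev : Fin (n + 1)), ((σ p.2).rev : Fin (n + 1))))
  · intro p hp
    rw [Finset.mem_filter, Finset.mem_product] at hp ⊢
    obtain ⟨⟨h1, h2⟩, hlt, hrot⟩ := hp
    refine ⟨⟨Finset.mem_image.2 ⟨p.1, h1, rfl⟩, Finset.mem_image.2 ⟨p.2, h2, rfl⟩⟩, ?_, ?_⟩
    · rw [rotD_lt_iff] at hrot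
      exact hrot
    · simpa [Equiv.Perm.coe_inv, Equiv.apply_symm_apply, Fin.rev_lt_rev] using hlt
  · intro p hp
    rw [Finset.mem_filter, Finset.mem_product] at hp ⊢
    obtain ⟨⟨h1, h2⟩, hlt, hv⟩ := hp
    obtain ⟨a, ha, hae⟩ := Finset.mem_image.1 h1
    obtain ⟨b, hb, hbe⟩ := Finset.mem_image.1 h2
    refine ⟨⟨?_, ?_⟩, ?_, ?_⟩
    · have : (σ p.1).rev = a := by
        rw [← hae]; simp [Fin.rev_rev]
      rw [this]; exact ha
    · have : (σ p.2).rev = b := by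
        rw [← hbe]; simp [Fin.rev_rev]
      rw [this]; exact hb
    · rw [Fin.rev_lt_rev]
      exact hv
    · rw [rotD_lt_iff]
      simpa [Fin.rev_rev] using hlt
  · intro p hp
    simp [Fin.rev_rev]
  · intro p hp
    simp [Fin.rev_rev]

lemma signSum_rot (σ : Equiv.Perm (Fin (n + 1))) : signSum (rotD σ) = signSum σ := by
  unfold signSum
  apply Fintype.sum_equiv
    (Equiv.finsetCongr ((Fin.revPerm : Equiv.Perm (Fin (n + 1))).trans
      (σ⁻¹ : Fin (n + 1) ≃ Fin (n + 1))))
  intro S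
  have hE : (Equiv.finsetCongr ((Fin.revPerm : Equiv.Perm (Fin (n + 1))).trans
      (σ⁻¹ : Fin (n + 1) ≃ Fin (n + 1)))) S = S.image fun x => σ⁻¹ x.rev := by
    rw [Equiv.finsetCongr_apply, Finset.map_eq_image]
    rfl
  rw [hE, Finset.card_image_of_injective _ (fun x y h => by
    have := congrArg σ h
    simp only [Equiv.Perm.coe_inv, Equiv.apply_symm_apply] at this
    exact Fin.rev_injective this), inversions_rot]

lemma signInv_rot (σ : Equiv.Perm (Fin (n + 1))) : signInv (rotD σ) = signInv σ := by
  unfold signInv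
  rw [signSum_rot]

end SignRot

/-- **Rotation invariance.** The 180 degree rotation of the diagram preserves both the cycle
invariant and the sign invariant. -/
theorem rot_invariance (n : ℕ) (σ : Equiv.Perm (Fin (n + 1))) :
    cycleInv (rotD σ) = cycleInv σ ∧ signInv (rotD σ) = signInv σ := by
  exact ⟨cycleInv_rot σ, signInv_rot σ⟩

end Rauzy
end
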